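/- Let c > 0, consider the Hamiltonian H(p) = c|p|²/2 on ℝⁿ, and let u_T : ℝⁿ → ℝ be Lipschitz. Then there exists a Lipschitz function u0 : ℝⁿ → ℝ with S_T^+ u0 = u_T if and only if u_T is semiconcave with linear modulus and constant 1/(c·T). -/

import Mathlib

open scoped RealInnerProductSpace
open Filter

noncomputable section

/-- `n`-dimensional Euclidean space. -/
abbrev Euc (n : ℕ) := EuclideanSpace ℝ (Fin n)

/-- A real-valued function on `ℝⁿ` is Lipschitz (with some constant). -/
def IsLip {n : ℕ} (f : Euc n → ℝ) : Prop := ∃ K : NNReal, LipschitzWith K f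

/-- `f` is semiconcave with linear modulus and constant `C`:
`f(x+h) + f(x-h) - 2 f(x) ≤ C ‖h‖²` for all `x, h`. -/
def Semiconcave {n : ℕ} (f : Euc n → ℝ) (C : ℝ) : Prop :=
  ∀ x h : Euc n, f (x + h) + f (x - h) - 2 * f x ≤ C * ‖h‖ ^ 2

/-- The forward Hopf–Lax operator for the Hamiltonian `H(p) = c‖p‖²/2`:
`(S_T^+ g)(x) = inf_y [g(y) + ‖x-y‖²/(2cT)]`. -/
def SplusIso {n : ℕ} (T c : ℝ) (g : Euc n → ℝ) (x : Euc n) : ℝ :=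
  ⨅ y : Euc n, (g y + ‖x - y‖ ^ 2 / (2 * c * T))

/-- A continuous midpoint-convex function is convex. -/
lemma convexOn_of_midpoint' {E : Type*} [NormedAddCommGroup E] [NormedSpace ℝ E]
    (g : E → ℝ) (hc : Continuous g)
    (hm : ∀ x h : E, 2 * g x ≤ g (x + h) + g (x - h)) :
    ConvexOn ℝ Set.univ g := by
  refine ⟨convex_univ, ?_⟩
  intro a _ b _ s t hs ht hst
  set v := b - a with hv
  set φ : ℝ → ℝ := fun r => g (a + r • v) - ((1 - r) * g a + r * g b) with hφ
  have hφc : Continuous φ := by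
    apply Continuous.sub
    · exact hc.comp (continuous_const.add (continuous_id.smul continuous_const))
    · continuity
  have hφ0 : φ 0 = 0 := by simp [hφ]
  have hφ1 : φ 1 = 0 := by simp [hφ, hv]
  obtain ⟨x₀, hx₀mem, hx₀⟩ := isCompact_Icc.exists_isMaxOn (α := ℝ) (s := Set.Icc (0:ℝ) 1)
    ⟨0, by norm_num⟩ hφc.continuousOn
  obtain ⟨hx0, hx1⟩ := hx₀mem
  have hmax : ∀ r ∈ Set.Icc (0:ℝ) 1, φ r ≤ φ x₀ := fun r hr => hx₀ hr
  set δ := min x₀ (1 - x₀) with hδ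
  have hδ0 : 0 ≤ δ := le_min hx0 (by linarith)
  have hmem1 : x₀ + δ ∈ Set.Icc (0:ℝ) 1 := by
    constructor
    · linarith
    · have : δ ≤ 1 - x₀ := min_le_right _ _
      linarith
  have hmem2 : x₀ - δ ∈ Set.Icc (0:ℝ) 1 := by
    constructor
    · have : δ ≤ x₀ := min_le_left _ _
      linarith
    · linarith
  have hkey : 2 * φ x₀ ≤ φ (x₀ + δ) + φ (x₀ - δ) := by
    have h1 : a + (x₀ + δ) • v = (a + x₀ • v) + δ • v := by
      rw [add_smul]; abel
    have h2 : a + (x₀ - δ) • v = (a + x₀ • v) - δ • v := by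
      rw [sub_smul]; abel
    have := hm (a + x₀ • v) (δ • v)
    simp only [hφ, h1, h2]
    ring_nf
    ring_nf at this
    linarith
  have he1 : φ (x₀ + δ) = φ x₀ := by
    have := hmax _ hmem1; have := hmax _ hmem2; linarith
  have he2 : φ (x₀ - δ) = φ x₀ := by
    have := hmax _ hmem1; have := hmax _ hmem2; linarith
  have hM0 : φ x₀ ≤ 0 := by
    rcases le_total x₀ (1 - x₀) with h | h
    · have : δ = x₀ := min_eq_left h
      rw [← he2, this]; simp [hφ0]
    · have : δ = 1 - x₀ := min_eq_right h
      rw [← he1, this]; simp [hφ1]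
  have hts : s = 1 - t := by linarith
  have harg : s • a + t • b = a + t • v := by
    rw [hts, hv, smul_sub, sub_smul, one_smul]; abel
  have := (hmax t ⟨ht, by linarith⟩).trans hM0
  rw [harg]
  simp only [hφ] at this
  simp only [smul_eq_mul]
  rw [hts]
  linarith [this]

/-- Existence of subgradients for continuous convex functions on Euclidean space. -/
lemma exists_subgradient' {n : ℕ} (g : Euc n → ℝ) (hg : ConvexOn ℝ Set.univ g)
    (hc : Continuous g) (x : Euc n) :
    ∃ p : Euc n, ∀ z, g x + ⟪p, z - x⟫ ≤ g z := by
  set S : Set (Euc n × ℝ) := {q | g q.1 < q.2} with hS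
  have hSopen : IsOpen S := isOpen_lt (hc.comp continuous_fst) continuous_snd
  have hSconv : Convex ℝ S := by
    rintro ⟨z1, t1⟩ h1 ⟨z2, t2⟩ h2 s t hs ht hst
    simp only [hS, Set.mem_setOf_eq] at h1 h2 ⊢
    have hcomb := hg.2 (Set.mem_univ z1) (Set.mem_univ z2) hs ht hst
    rcases eq_or_lt_of_le hs with hs0 | hs0
    · have hs' : s = 0 := hs0.symm
      subst hs'
      have ht' : t = 1 := by linarith
      subst ht'
      simpa using h2
    · have h1' : s * g z1 < s * t1 := by exact (mul_lt_mul_iff_right₀ hs0).2 h1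
      have h2' : t * g z2 ≤ t * t2 := mul_le_mul_of_nonneg_left (le_of_lt h2) ht
      calc g (s • (z1, t1) + t • (z2, t2)).1 = g (s • z1 + t • z2) := rfl
        _ ≤ s * g z1 + t * g z2 := hcomb
        _ < s * t1 + t * t2 := by linarith
        _ = (s • (z1, t1) + t • (z2, t2)).2 := by simp [Prod.smul_mk]
  have hxnot : (x, g x) ∉ S := by simp [hS]
  obtain ⟨f, hf⟩ := geometric_hahn_banach_point_open hSconv hSopen hxnot
  set β : ℝ := f (0, 1) with hβdef
  have hsplit : ∀ (z : Euc n) (t : ℝ), f (z, t) = f (z, 0) + t * β := by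
    intro z t
    have : (z, t) = (z, (0:ℝ)) + t • ((0 : Euc n), (1:ℝ)) := by
      simp [Prod.ext_iff]
    rw [this, map_add, map_smul]
    simp [hβdef]
  have hβpos : 0 < β := by
    have := hf (x, g x + 1) (by simp [hS])
    rw [hsplit x (g x + 1), hsplit x (g x)] at this
    linarith
  have hz : ∀ z, f (x, g x) ≤ f (z, g z) := by
    intro z
    by_contra hcon
    push_neg at hcon
    set ε := (f (x, g x) - f (z, g z)) / β with hε
    have hεpos : 0 < ε := div_pos (by linarith) hβpos
    have hlt := hf (z, g z + ε) (by simp [hS, hεpos])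
    rw [hsplit z (g z + ε)] at hlt
    have hεβ : ε * β = f (x, g x) - f (z, g z) := by
      rw [hε]; field_simp
    have hdist : (g z + ε) * β = g z * β + ε * β := by ring
    linarith [hsplit z (g z)]
  set ℓ : Euc n →L[ℝ] ℝ := f.comp (ContinuousLinearMap.inl ℝ (Euc n) ℝ) with hℓ
  have hℓap : ∀ z : Euc n, ℓ z = f (z, 0) := fun z => rfl
  refine ⟨(InnerProductSpace.toDual ℝ (Euc n)).symm ((-β⁻¹) • ℓ), fun z => ?_⟩
  rw [InnerProductSpace.toDual_symm_apply]
  have h1 := hz z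
  rw [hsplit x (g x), hsplit z (g z)] at h1
  have h2 : ℓ (z - x) = f (z, 0) - f (x, 0) := by rw [map_sub, hℓap, hℓap]
  simp only [ContinuousLinearMap.smul_apply, smul_eq_mul, h2]
  have hβne : β ≠ 0 := ne_of_gt hβpos
  have h3 : (g x - g z) * β ≤ f (z, 0) - f (x, 0) := by nlinarith
  have h4 := mul_le_mul_of_nonneg_right h3 (inv_pos.2 hβpos).le
  rw [mul_assoc, mul_inv_cancel₀ hβne, mul_one] at h4
  linarith

/-- The quadratic-penalty family of a Lipschitz function is bounded below. -/
lemma bddBelow_family' {n : ℕ} {g : Euc n → ℝ} {K : NNReal} (hg : LipschitzWith K g)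
    {c T : ℝ} (hc : 0 < c) (hT : 0 < T) (x : Euc n) :
    BddBelow (Set.range fun y : Euc n => g y + ‖x - y‖ ^ 2 / (2 * c * T)) := by
  refine ⟨g x - (K : ℝ) ^ 2 * c * T / 2, ?_⟩
  rintro _ ⟨y, rfl⟩
  have hr := hg.dist_le_mul x y
  rw [Real.dist_eq, dist_eq_norm] at hr
  have h1 : g x - g y ≤ (K : ℝ) * ‖x - y‖ := le_trans (le_abs_self _) hr
  have h2 : (K : ℝ) * ‖x - y‖ - (K : ℝ) ^ 2 * c * T / 2 ≤ ‖x - y‖ ^ 2 / (2 * c * T) := by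
    rw [le_div_iff₀ (by positivity : (0:ℝ) < 2 * c * T)]
    nlinarith [sq_nonneg (‖x - y‖ - (K : ℝ) * c * T)]
  dsimp only
  linarith

/-- The quadratic-reward family of a Lipschitz function is bounded above. -/
lemma bddAbove_family' {n : ℕ} {g : Euc n → ℝ} {K : NNReal} (hg : LipschitzWith K g)
    {c T : ℝ} (hc : 0 < c) (hT : 0 < T) (y : Euc n) :
    BddAbove (Set.range fun z : Euc n => g z - ‖z - y‖ ^ 2 / (2 * c * T)) := by
  refine ⟨g y + (K : ℝ) ^ 2 * c * T / 2, ?_⟩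
  rintro _ ⟨z, rfl⟩
  have hr := hg.dist_le_mul z y
  rw [Real.dist_eq, dist_eq_norm] at hr
  have h1 : g z - g y ≤ (K : ℝ) * ‖z - y‖ := le_trans (le_abs_self _) hr
  have h2 : (K : ℝ) * ‖z - y‖ - (K : ℝ) ^ 2 * c * T / 2 ≤ ‖z - y‖ ^ 2 / (2 * c * T) := by
    rw [le_div_iff₀ (by positivity : (0:ℝ) < 2 * c * T)]
    nlinarith [sq_nonneg (‖z - y‖ - (K : ℝ) * c * T)]
  dsimp only
  linarith

/-- For `H(p) = c‖p‖²/2`, a Lipschitz target `u_T` is reachable iff it is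
semiconcave with linear modulus and constant `1/(cT)`. -/
theorem reachable_iff_semiconcave_isotropic
    {n : ℕ} (hn : 0 < n) (T : ℝ) (hT : 0 < T) (c : ℝ) (hc : 0 < c)
    (uT : Euc n → ℝ) (huT : IsLip uT) :
    (∃ u0 : Euc n → ℝ, IsLip u0 ∧ SplusIso T c u0 = uT) ↔
      Semiconcave uT (1 / (c * T)) := by
  obtain ⟨K, hK⟩ := huT
  constructor
  · -- reachable → semiconcave
    rintro ⟨u0, ⟨K0, hK0⟩, hS⟩
    intro x h
    have hbdd : ∀ w : Euc n, BddBelow (Set.range fun y : Euc n =>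
        u0 y + ‖w - y‖ ^ 2 / (2 * c * T)) := fun w => bddBelow_family' hK0 hc hT w
    have hval : ∀ w, uT w = ⨅ y : Euc n, (u0 y + ‖w - y‖ ^ 2 / (2 * c * T)) := by
      intro w; rw [← hS]; rfl
    have key : ∀ ε : ℝ, 0 < ε →
        uT (x + h) + uT (x - h) - 2 * uT x ≤ 1 / (c * T) * ‖h‖ ^ 2 + ε := by
      intro ε hε
      have hlt : (⨅ y : Euc n, (u0 y + ‖x - y‖ ^ 2 / (2 * c * T))) < uT x + ε / 2 := by
        rw [← hval x]; linarith
      obtain ⟨y, hy⟩ := exists_lt_of_ciInf_lt hlt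
      have h1 : uT (x + h) ≤ u0 y + ‖x + h - y‖ ^ 2 / (2 * c * T) := by
        rw [hval (x + h)]; exact ciInf_le (hbdd _) y
      have h2 : uT (x - h) ≤ u0 y + ‖x - h - y‖ ^ 2 / (2 * c * T) := by
        rw [hval (x - h)]; exact ciInf_le (hbdd _) y
      have e1 : x - y + h = x + h - y := by abel
      have e2 : x - y - h = x - h - y := by abel
      have hpar := parallelogram_law_with_norm ℝ (x - y) h
      rw [e1, e2] at hpar
      have hA : ‖x + h - y‖ ^ 2 + ‖x - h - y‖ ^ 2 = 2 * ‖x - y‖ ^ 2 + 2 * ‖h‖ ^ 2 := by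
        rw [pow_two, pow_two, pow_two, pow_two]; linarith
      have hcT : (c : ℝ) * T ≠ 0 := by positivity
      have hq : ‖x + h - y‖ ^ 2 / (2 * c * T) + ‖x - h - y‖ ^ 2 / (2 * c * T)
          - 2 * (‖x - y‖ ^ 2 / (2 * c * T)) = 1 / (c * T) * ‖h‖ ^ 2 := by
        rw [show (1:ℝ) / (c * T) = 2 / (2 * c * T) by rw [div_eq_div_iff hcT (by positivity)]; ring]
        linear_combination hA / (2 * c * T)
      linarith
    by_contra hcon
    push_neg at hcon
    have := key ((uT (x + h) + uT (x - h) - 2 * uT x - 1 / (c * T) * ‖h‖ ^ 2) / 2)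
      (by linarith)
    linarith
  · -- semiconcave → reachable
    intro hsc
    set g : Euc n → ℝ := fun z => ‖z‖ ^ 2 / (2 * c * T) - uT z with hg
    have hgc : Continuous g := ((continuous_norm.pow 2).div_const _).sub hK.continuous
    have hgm : ∀ x h : Euc n, 2 * g x ≤ g (x + h) + g (x - h) := by
      intro x h
      have hp := parallelogram_law_with_norm ℝ x h
      have hA : ‖x + h‖ ^ 2 + ‖x - h‖ ^ 2 = 2 * ‖x‖ ^ 2 + 2 * ‖h‖ ^ 2 := by
        rw [pow_two, pow_two, pow_two, pow_two]; linarith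
      have hcT : (c : ℝ) * T ≠ 0 := by positivity
      have hq : ‖x + h‖ ^ 2 / (2 * c * T) + ‖x - h‖ ^ 2 / (2 * c * T)
          = 2 * (‖x‖ ^ 2 / (2 * c * T)) + 1 / (c * T) * ‖h‖ ^ 2 := by
        rw [show (1:ℝ) / (c * T) = 2 / (2 * c * T) by rw [div_eq_div_iff hcT (by positivity)]; ring]
        linear_combination hA / (2 * c * T)
      have := hsc x h
      simp only [hg]
      linarith
    have hgconv := convexOn_of_midpoint' g hgc hgm
    set u0 : Euc n → ℝ := fun y => ⨆ z : Euc n, (uT z - ‖z - y‖ ^ 2 / (2 * c * T)) with hu0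
    have hbddA : ∀ y : Euc n, BddAbove (Set.range fun z : Euc n =>
        uT z - ‖z - y‖ ^ 2 / (2 * c * T)) := fun y => bddAbove_family' hK hc hT y
    have hkeyL : ∀ y1 y2 : Euc n, u0 y1 ≤ u0 y2 + (K : ℝ) * ‖y1 - y2‖ := by
      intro y1 y2
      refine ciSup_le fun z => ?_
      have hd := hK.dist_le_mul z (z + (y2 - y1))
      rw [Real.dist_eq, dist_eq_norm] at hd
      have hv : z - (z + (y2 - y1)) = y1 - y2 := by abel
      rw [hv] at hd
      have hz' : uT z ≤ uT (z + (y2 - y1)) + (K : ℝ) * ‖y1 - y2‖ := by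
        have := le_trans (le_abs_self _) hd
        linarith
      have hnorm : (z + (y2 - y1)) - y2 = z - y1 := by abel
      have hle : uT (z + (y2 - y1)) - ‖(z + (y2 - y1)) - y2‖ ^ 2 / (2 * c * T) ≤ u0 y2 :=
        le_ciSup (hbddA y2) (z + (y2 - y1))
      rw [hnorm] at hle
      linarith
    have hu0K : LipschitzWith K u0 := by
      apply LipschitzWith.of_dist_le_mul
      intro y1 y2
      rw [Real.dist_eq, dist_eq_norm, abs_sub_le_iff]
      constructor
      · linarith [hkeyL y1 y2]
      · have := hkeyL y2 y1
        rw [norm_sub_rev] at this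
        linarith
    refine ⟨u0, ⟨K, hu0K⟩, ?_⟩
    funext x
    show (⨅ y : Euc n, (u0 y + ‖x - y‖ ^ 2 / (2 * c * T))) = uT x
    have hbddB : BddBelow (Set.range fun y : Euc n => u0 y + ‖x - y‖ ^ 2 / (2 * c * T)) :=
      bddBelow_family' hu0K hc hT x
    apply le_antisymm
    · obtain ⟨p, hp⟩ := exists_subgradient' g hgconv hgc x
      set y : Euc n := (c * T) • p with hy
      have hub : u0 y ≤ uT x - ‖x - y‖ ^ 2 / (2 * c * T) := by
        refine ciSup_le fun z => ?_
        have hpz := hp z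
        simp only [hg] at hpz
        have hnz : ‖z - y‖ ^ 2 = ‖z‖ ^ 2 - 2 * ⟪z, y⟫ + ‖y‖ ^ 2 := norm_sub_sq_real z y
        have hnx : ‖x - y‖ ^ 2 = ‖x‖ ^ 2 - 2 * ⟪x, y⟫ + ‖y‖ ^ 2 := norm_sub_sq_real x y
        have hinner : ⟪z, y⟫ - ⟪x, y⟫ = (c * T) * ⟪p, z - x⟫ := by
          rw [hy, real_inner_smul_right, real_inner_smul_right, inner_sub_right,
            real_inner_comm z p, real_inner_comm x p]
          ring
        have hD1 : (2 * c * T) * (2 * c * T)⁻¹ = 1 := mul_inv_cancel₀ (by positivity)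
        have hq3 : ‖z - y‖ ^ 2 / (2 * c * T) - ‖x - y‖ ^ 2 / (2 * c * T)
            = ‖z‖ ^ 2 / (2 * c * T) - ‖x‖ ^ 2 / (2 * c * T) - ⟪p, z - x⟫ := by
          rw [hnz, hnx]
          linear_combination (-2 / (2 * c * T)) * hinner - ⟪p, z - x⟫ * hD1
        linarith [hpz, hq3]
      calc (⨅ y : Euc n, (u0 y + ‖x - y‖ ^ 2 / (2 * c * T)))
          ≤ u0 y + ‖x - y‖ ^ 2 / (2 * c * T) := ciInf_le hbddB y
        _ ≤ uT x := by linarith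
    · refine le_ciInf fun y => ?_
      have := le_ciSup (hbddA y) x
      have h0 : uT x - ‖x - y‖ ^ 2 / (2 * c * T) ≤ u0 y := le_ciSup (hbddA y) x
      linarith
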